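/- Quantum adiabatic theorem (special case, eigenvalue 0): with assumptions as below, ‖φ(1) − ψ(1)‖ ≤ (1/T)·[(2‖H'‖ + ‖H''‖)/λ² + 4‖H'‖²/λ³]; in particular ‖φ(1) − ψ(1)‖ ≤ ε whenever T ≥ (1/ε)·[(2‖H'‖+‖H''‖)/λ² + 4‖H'‖²/λ³]. -/

import Mathlib

open scoped InnerProductSpace

section AdiabaticAux
variable {n : ℕ}
local notation "E" => EuclideanSpace ℂ (Fin n)

lemma norm_sq_eq_sum_aux {n : ℕ} (b : OrthonormalBasis (Fin n) ℂ (EuclideanSpace ℂ (Fin n)))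
    (x : EuclideanSpace ℂ (Fin n)) : ‖x‖ ^ 2 = ∑ i, ‖b.repr x i‖ ^ 2 := by
  rw [← b.repr.norm_map x, EuclideanSpace.norm_eq, Real.sq_sqrt (by positivity)]

lemma gap_lemma {n : ℕ} (K : EuclideanSpace ℂ (Fin n) →L[ℂ] EuclideanSpace ℂ (Fin n))
    (hK : IsSelfAdjoint K) (lam : ℝ) (hlam : 0 < lam) (φ0 : EuclideanSpace ℂ (Fin n))
    (hnd : ∀ v, K v = 0 → ∃ c : ℂ, v = c • φ0)
    (hgap : ∀ μ ∈ spectrum ℂ K, μ ≠ 0 → lam ≤ ‖μ‖)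
    (u : EuclideanSpace ℂ (Fin n)) (hu : ⟪φ0, u⟫_ℂ = 0) :
    lam * ‖u‖ ≤ ‖K u‖ := by
  have hsym : (K : EuclideanSpace ℂ (Fin n) →ₗ[ℂ] EuclideanSpace ℂ (Fin n)).IsSymmetric :=
    ContinuousLinearMap.isSelfAdjoint_iff_isSymmetric.mp hK
  have hn : Module.finrank ℂ (EuclideanSpace ℂ (Fin n)) = n := finrank_euclideanSpace_fin
  set b := hsym.eigenvectorBasis hn with hb
  have heigv : ∀ i, K (b i) = (hsym.eigenvalues hn i : ℂ) • b i := fun i =>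
    hsym.apply_eigenvectorBasis hn i
  have hterm : ∀ i, lam ^ 2 * ‖b.repr u i‖ ^ 2 ≤ ‖hsym.eigenvalues hn i * b.repr u i‖ ^ 2 := by
    intro i
    by_cases h0 : hsym.eigenvalues hn i = 0
    · -- eigenvector is multiple of φ0, so inner with u vanishes
      have : K (b i) = 0 := by rw [heigv i, h0]; simp
      obtain ⟨c, hc⟩ := hnd _ this
      have : b.repr u i = 0 := by
        rw [b.repr_apply_apply, hc, inner_smul_left, hu, mul_zero]
      rw [this, h0]; simp
    · have hmem : (hsym.eigenvalues hn i : ℂ) ∈ spectrum ℂ K := by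
        rw [spectrum.mem_iff]
        intro hunit
        obtain ⟨v, hv⟩ := hunit.exists_left_inv
        have hbz : b i ≠ 0 := b.toBasis.ne_zero i
        have : (algebraMap ℂ _ (hsym.eigenvalues hn i : ℂ) - K) (b i) = 0 := by
          simp [ContinuousLinearMap.sub_apply, heigv i, Algebra.algebraMap_eq_smul_one]
        have := congrArg (fun w => v w) this
        simp only [map_zero] at this
        rw [← ContinuousLinearMap.comp_apply, ← ContinuousLinearMap.mul_def, hv] at this
        exact hbz (by simpa using this)
      have := hgap _ hmem (by exact_mod_cast h0)
      have hl : lam ≤ |hsym.eigenvalues hn i| := by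
        simpa [Complex.norm_real] using this
      have h1 : lam * ‖b.repr u i‖ ≤ |hsym.eigenvalues hn i| * ‖b.repr u i‖ :=
        mul_le_mul_of_nonneg_right hl (norm_nonneg _)
      calc lam ^ 2 * ‖b.repr u i‖ ^ 2 = (lam * ‖b.repr u i‖) ^ 2 := by ring
        _ ≤ (|hsym.eigenvalues hn i| * ‖b.repr u i‖) ^ 2 := by
            apply pow_le_pow_left₀ (by positivity) h1
        _ = ‖(hsym.eigenvalues hn i : ℂ) * b.repr u i‖ ^ 2 := by
            rw [norm_mul, Complex.norm_real, Real.norm_eq_abs]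
  have hKu : ∀ i, b.repr (K u) i = hsym.eigenvalues hn i * b.repr u i := by
    intro i
    simpa using hsym.eigenvectorBasis_apply_self_apply hn u i
  have h2 : (lam * ‖u‖) ^ 2 ≤ ‖K u‖ ^ 2 := by
    rw [mul_pow, norm_sq_eq_sum_aux b (K u), norm_sq_eq_sum_aux b u, Finset.mul_sum]
    apply Finset.sum_le_sum
    intro i _
    rw [hKu i]
    exact hterm i
  calc lam * ‖u‖ = √((lam * ‖u‖)^2) := by rw [Real.sqrt_sq (by positivity)]
    _ ≤ √(‖K u‖^2) := Real.sqrt_le_sqrt h2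
    _ = ‖K u‖ := Real.sqrt_sq (norm_nonneg _)


noncomputable def proj (φ0 : E) : E →L[ℂ] E := (innerSL ℂ φ0).smulRight φ0

lemma proj_apply (φ0 v : E) : proj φ0 v = ⟪φ0, v⟫_ℂ • φ0 := rfl

lemma unit_aux (K : E →L[ℂ] E) (hsym : ∀ x y : E, ⟪K x, y⟫_ℂ = ⟪x, K y⟫_ℂ)
    (φ0 : E) (hφ0 : ‖φ0‖ = 1) (hker : K φ0 = 0)
    (hnd : ∀ v, K v = 0 → ∃ c : ℂ, v = c • φ0) :
    IsUnit (K + proj φ0) := by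
  rw [ContinuousLinearMap.isUnit_iff_bijective]
  have hinj0 : ∀ v, (K + proj φ0) v = 0 → v = 0 := by
      intro v hv
      have hv' : K v + ⟪φ0, v⟫_ℂ • φ0 = 0 := hv
      have hip : ⟪φ0, φ0⟫_ℂ = 1 := by
        rw [inner_self_eq_norm_sq_to_K, hφ0]; norm_num
      have h0 : ⟪φ0, v⟫_ℂ = 0 := by
        have := congrArg (fun w => ⟪φ0, w⟫_ℂ) hv'
        simp only [inner_add_right, inner_smul_right, inner_zero_right] at this
        have hKv : ⟪φ0, K v⟫_ℂ = 0 := by rw [← hsym, hker, inner_zero_left]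
        rw [hKv, hip, mul_one, zero_add] at this
        exact this
      have hKv0 : K v = 0 := by rwa [h0, zero_smul, add_zero] at hv'
      obtain ⟨c, hc⟩ := hnd v hKv0
      have : c = 0 := by
        have := h0
        rw [hc, inner_smul_right, hip, mul_one] at this
        exact this
      rw [hc, this, zero_smul]
  have hinj : Function.Injective (K + proj φ0) := by
    intro a b hab
    have := hinj0 (a - b) (by rw [map_sub, hab, sub_self])
    exact sub_eq_zero.mp this
  exact ⟨hinj, (LinearMap.injective_iff_surjective (f := ((K + proj φ0) : E →ₗ[ℂ] E))).mp hinj⟩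

lemma R_phi {K R : E →L[ℂ] E} {φ0 : E} (hRA : ∀ v, R ((K + proj φ0) v) = v) (hφ0 : ‖φ0‖ = 1) (hker : K φ0 = 0) :
    R φ0 = φ0 := by
  have hip : ⟪φ0, φ0⟫_ℂ = 1 := by rw [inner_self_eq_norm_sq_to_K, hφ0]; norm_num
  have h : (K + proj φ0) φ0 = φ0 := by
    simp [ContinuousLinearMap.add_apply, proj_apply, hker, hip, hφ0]
  calc R φ0 = R ((K + proj φ0) φ0) := by rw [h]
    _ = φ0 := hRA φ0

lemma R_perp {K R : E →L[ℂ] E} {φ0 : E} {lam : ℝ} (hsym : ∀ x y : E, ⟪K x, y⟫_ℂ = ⟪x, K y⟫_ℂ)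
    (hgapn : ∀ u : E, ⟪φ0, u⟫_ℂ = 0 → lam * ‖u‖ ≤ ‖K u‖)
    (hφ0 : ‖φ0‖ = 1) (hker : K φ0 = 0)
    (hAR : ∀ v, (K + proj φ0) (R v) = v)
    (v : E) (hv : ⟪φ0, v⟫_ℂ = 0) :
    ⟪φ0, R v⟫_ℂ = 0 ∧ K (R v) = v ∧ lam * ‖R v‖ ≤ ‖v‖ := by
  have hip : ⟪φ0, φ0⟫_ℂ = 1 := by rw [inner_self_eq_norm_sq_to_K, hφ0]; norm_num
  have hAz : K (R v) + ⟪φ0, R v⟫_ℂ • φ0 = v := hAR v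
  have h1 : ⟪φ0, R v⟫_ℂ = 0 := by
    have h : ⟪φ0, K (R v) + ⟪φ0, R v⟫_ℂ • φ0⟫_ℂ = ⟪φ0, v⟫_ℂ := by rw [hAz]
    simp only [inner_add_right, inner_smul_right, hip, mul_one] at h
    have hKz : ⟪φ0, K (R v)⟫_ℂ = 0 := by rw [← hsym, hker, inner_zero_left]
    rw [hKz, zero_add, hv] at h
    exact h
  have h2 : K (R v) = v := by rwa [h1, zero_smul, add_zero] at hAz
  refine ⟨h1, h2, ?_⟩
  have := hgapn _ h1
  rwa [h2] at this

lemma norm_sub_proj (φ0 v : E) (hφ0 : ‖φ0‖ = 1) : ‖v - proj φ0 v‖ ≤ ‖v‖ := by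
  have hip : ⟪φ0, φ0⟫_ℂ = 1 := by rw [inner_self_eq_norm_sq_to_K, hφ0]; norm_num
  have horth : ⟪proj φ0 v, v - proj φ0 v⟫_ℂ = 0 := by
    simp only [proj_apply, inner_sub_right, inner_smul_left, inner_smul_right, hip, mul_one]
    ring
  have key : ‖v‖ ^ 2 = ‖proj φ0 v‖ ^ 2 + ‖v - proj φ0 v‖ ^ 2 := by
    have := norm_add_sq (𝕜 := ℂ) (proj φ0 v) (v - proj φ0 v)
    simp only [horth, map_zero, mul_zero, add_zero, zero_mul] at this
    simpa [add_sub_cancel] using this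
  have h2 : ‖v - proj φ0 v‖ ^ 2 ≤ ‖v‖ ^ 2 := by nlinarith [norm_nonneg (proj φ0 v)]
  calc ‖v - proj φ0 v‖ = √(‖v - proj φ0 v‖ ^ 2) := (Real.sqrt_sq (norm_nonneg _)).symm
    _ ≤ √(‖v‖ ^ 2) := Real.sqrt_le_sqrt h2
    _ = ‖v‖ := Real.sqrt_sq (norm_nonneg _)

lemma perp_sub_proj (φ0 v : E) (hφ0 : ‖φ0‖ = 1) : ⟪φ0, v - proj φ0 v⟫_ℂ = 0 := by
  have hip : ⟪φ0, φ0⟫_ℂ = 1 := by rw [inner_self_eq_norm_sq_to_K, hφ0]; norm_num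
  simp [proj_apply, inner_sub_right, inner_smul_right, hip, hφ0]


noncomputable def projD (a b : E) : E →L[ℂ] E := (innerSL ℂ a).smulRight b

lemma projD_apply (a b v : E) : projD a b v = ⟪a, v⟫_ℂ • b := rfl

lemma isBBM_projD : IsBoundedBilinearMap ℝ (fun p : E × E => projD p.1 p.2) where
  add_left x₁ x₂ y := by
    ext1 v
    simp only [projD_apply, ContinuousLinearMap.add_apply, inner_add_left, add_smul]
  smul_left c x y := by
    ext1 v
    show ⟪c • x, v⟫_ℂ • y = c • ⟪x, v⟫_ℂ • y
    have h1 : (c • x : E) = (c : ℂ) • x := by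
      rw [← algebraMap_smul ℂ c x, Complex.coe_algebraMap]
    have h2 : c • (⟪x, v⟫_ℂ • y) = (c : ℂ) • (⟪x, v⟫_ℂ • y) := by
      rw [← algebraMap_smul ℂ c (⟪x, v⟫_ℂ • y), Complex.coe_algebraMap]
    rw [h1, inner_smul_left, Complex.conj_ofReal, mul_smul, h2]
  add_right x y₁ y₂ := by
    ext1 v
    simp only [projD_apply, ContinuousLinearMap.add_apply, smul_add]
  smul_right c x y := by
    ext1 v
    show ⟪x, v⟫_ℂ • c • y = c • ⟪x, v⟫_ℂ • y
    rw [smul_comm]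
  bound := by
    refine ⟨1, one_pos, fun x y => ?_⟩
    rw [one_mul, projD, ContinuousLinearMap.norm_smulRight_apply, innerSL_apply_norm]

lemma isBBM_apply : IsBoundedBilinearMap ℝ (fun p : (E →L[ℂ] E) × E => p.1 p.2) where
  add_left A B v := rfl
  smul_left c A v := rfl
  add_right A v w := A.map_add v w
  smul_right c A v := A.map_smul_of_tower c v
  bound := ⟨1, one_pos, fun A v => by
    show ‖A v‖ ≤ 1 * ‖A‖ * ‖v‖
    rw [one_mul]
    exact A.le_opNorm v⟩

lemma proj_hasDerivAt {φ φ' : ℝ → E} {s : ℝ} (h : HasDerivAt φ (φ' s) s) :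
    HasDerivAt (fun t => projD (φ t) (φ t))
      (projD (φ s) (φ' s) + projD (φ' s) (φ s)) s := by
  have hb := (isBBM_projD (n := n)).hasFDerivAt (φ s, φ s)
  have hp : HasDerivAt (fun t => ((φ t, φ t) : E × E)) ((φ' s, φ' s) : E × E) s := h.prodMk h
  have h2 := hb.comp_hasDerivAt s hp
  simpa [Function.comp_def] using h2

lemma inverse_hasDerivAt {A : ℝ → (E →L[ℂ] E)} {A' : E →L[ℂ] E} {s : ℝ} (hA : HasDerivAt A A' s)
    (hu : IsUnit (A s)) :
    HasDerivAt (fun t => Ring.inverse (A t))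
      (-(Ring.inverse (A s) * A' * Ring.inverse (A s))) s := by
  obtain ⟨u, hu⟩ := hu
  have h1 := hasFDerivAt_ringInverse (𝕜 := ℝ) (R := E →L[ℂ] E) u
  rw [hu] at h1
  have h2 := h1.comp_hasDerivAt s hA
  have h3 : (Ring.inverse (A s)) = (↑u⁻¹ : E →L[ℂ] E) := by rw [← hu, Ring.inverse_unit]
  simpa [h3, ContinuousLinearMap.mulLeftRight_apply, Function.comp_def] using h2

lemma clm_app_hasDerivAt {A : ℝ → (E →L[ℂ] E)} {A' : E →L[ℂ] E} {f : ℝ → E} {f' : E} {s : ℝ}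
    (hA : HasDerivAt A A' s) (hf : HasDerivAt f f' s) :
    HasDerivAt (fun t => A t (f t)) (A' (f s) + A s f') s := by
  have hb := (isBBM_apply (n := n)).hasFDerivAt (A s, f s)
  have hp : HasDerivAt (fun t => ((A t, f t) : (E →L[ℂ] E) × E)) ((A', f') : (E →L[ℂ] E) × E) s :=
    hA.prodMk hf
  have h2 := hb.comp_hasDerivAt s hp
  simpa [add_comm, Function.comp_def] using h2

lemma clm_app_const_hasDerivAt {A : ℝ → (E →L[ℂ] E)} {A' : E →L[ℂ] E} {x : E} {s : ℝ}
    (hA : HasDerivAt A A' s) :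
    HasDerivAt (fun t => A t x) (A' x) s := by
  simpa using clm_app_hasDerivAt hA (hasDerivAt_const s x)

lemma deriv_symm {Hf H'f : ℝ → E →L[ℂ] E}
    (hsym : ∀ s (x y : E), ⟪Hf s x, y⟫_ℂ = ⟪x, Hf s y⟫_ℂ)
    (hd : ∀ s, HasDerivAt Hf (H'f s) s) (s : ℝ) (x y : E) :
    ⟪H'f s x, y⟫_ℂ = ⟪x, H'f s y⟫_ℂ := by
  have h1 : HasDerivAt (fun t => ⟪Hf t x, y⟫_ℂ) (⟪H'f s x, y⟫_ℂ) s := by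
    simpa using (clm_app_const_hasDerivAt (hd s) (x := x)).inner (𝕜 := ℂ) (hasDerivAt_const s y)
  have h2 : HasDerivAt (fun t => ⟪x, Hf t y⟫_ℂ) (⟪x, H'f s y⟫_ℂ) s := by
    simpa using (hasDerivAt_const s x).inner (𝕜 := ℂ) (clm_app_const_hasDerivAt (hd s) (x := y))
  have he : (fun t => ⟪Hf t x, y⟫_ℂ) = fun t => ⟪x, Hf t y⟫_ℂ := funext fun t => hsym t x y
  rw [he] at h1
  exact h1.unique h2


lemma diss_bound {e g : ℝ → E} {K : ℝ → E →L[ℂ] E} {T : ℝ}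
    (hKsym : ∀ s (x y : E), ⟪K s x, y⟫_ℂ = ⟪x, K s y⟫_ℂ)
    (he : ∀ s, HasDerivAt e (g s + (-Complex.I * (T : ℂ)) • (K s (e s))) s)
    (hg : Continuous g) (C : ℝ) (hC : ∀ s ∈ Set.Icc (0:ℝ) 1, ‖g s‖ ≤ C) :
    ‖e 1‖ ≤ ‖e 0‖ + C := by
  have hecont : Continuous e := by
    rw [continuous_iff_continuousAt]; exact fun s => (he s).continuousAt
  set F : ℝ → ℝ := fun s => (⟪e s, e s⟫_ℂ).re with hF_def
  have hFnorm : ∀ s, F s = ‖e s‖ ^ 2 := by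
    intro s
    show (⟪e s, e s⟫_ℂ).re = ‖e s‖ ^ 2
    rw [← RCLike.re_to_complex]
    exact inner_self_eq_norm_sq (𝕜 := ℂ) _
  have hFnonneg : ∀ s, 0 ≤ F s := fun s => by rw [hFnorm]; positivity
  have hFcont : Continuous F := Complex.continuous_re.comp
    ((continuous_inner (𝕜 := ℂ)).comp (hecont.prodMk hecont) : Continuous fun s => ⟪e s, e s⟫_ℂ)
  have hFd : ∀ s, HasDerivAt F (2 * (⟪e s, g s⟫_ℂ).re) s := by
    intro s
    have h1 : HasDerivAt (fun t => ⟪e t, e t⟫_ℂ)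
        (⟪e s, g s + (-Complex.I * (T : ℂ)) • (K s (e s))⟫_ℂ
          + ⟪g s + (-Complex.I * (T : ℂ)) • (K s (e s)), e s⟫_ℂ) s :=
      (he s).inner (𝕜 := ℂ) (he s)
    have h2 := (Complex.reCLM.hasFDerivAt.comp_hasDerivAt s h1)
    -- simplify the derivative value
    have hc : (⟪e s, K s (e s)⟫_ℂ).im = 0 := by
      have hconj : (starRingEnd ℂ) ⟪e s, K s (e s)⟫_ℂ = ⟪e s, K s (e s)⟫_ℂ := by
        rw [inner_conj_symm]
        exact hKsym s (e s) (e s)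
      exact Complex.conj_eq_iff_im.mp hconj
    have hc2 : (⟪K s (e s), e s⟫_ℂ).im = 0 := by
      rw [hKsym s (e s) (e s)]; exact hc
    have hval : (⟪e s, g s + (-Complex.I * (T : ℂ)) • (K s (e s))⟫_ℂ
          + ⟪g s + (-Complex.I * (T : ℂ)) • (K s (e s)), e s⟫_ℂ).re
        = 2 * (⟪e s, g s⟫_ℂ).re := by
      rw [inner_add_right, inner_add_left, inner_smul_right, inner_smul_left,
        ← inner_conj_symm (e s) (g s), ← inner_conj_symm (e s) (K s (e s))]
      set a := ⟪e s, g s⟫_ℂ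
      set b := ⟪e s, K s (e s)⟫_ℂ
      simp only [Complex.add_re, Complex.mul_re, Complex.conj_re, Complex.conj_im,
        Complex.mul_im, Complex.neg_re, Complex.neg_im, Complex.I_re, Complex.I_im,
        Complex.ofReal_re, Complex.ofReal_im, hc, hc2]
      ring
    rw [← hval]
    exact h2
  -- now the sqrt trick
  have key : ∀ δ : ℝ, 0 < δ → ‖e 1‖ ≤ ‖e 0‖ + C + δ := by
    intro δ hδ
    set u : ℝ → ℝ := fun s => Real.sqrt (F s + δ ^ 2) with hu_def
    have hpos : ∀ s, 0 < F s + δ ^ 2 := fun s => by nlinarith [hFnonneg s]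
    have hud : ∀ s, HasDerivAt u ((1 / (2 * Real.sqrt (F s + δ ^ 2))) * (2 * (⟪e s, g s⟫_ℂ).re)) s := by
      intro s
      exact (Real.hasDerivAt_sqrt (ne_of_gt (hpos s))).comp s ((hFd s).add_const (δ ^ 2))
    set d : ℝ → ℝ := fun s => (1 / (2 * Real.sqrt (F s + δ ^ 2))) * (2 * (⟪e s, g s⟫_ℂ).re)
      with hd_def
    have hdcont : Continuous d := by
      apply Continuous.mul
      · apply Continuous.div continuous_const
        · exact (continuous_const.mul ((hFcont.add continuous_const).sqrt))
        · intro s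
          have := Real.sqrt_pos.mpr (hpos s)
          positivity
      · exact (continuous_const.mul (Complex.continuous_re.comp
          ((continuous_inner (𝕜 := ℂ)).comp (hecont.prodMk hg))))
    have hint : u 1 - u 0 = ∫ s in (0:ℝ)..1, d s := by
      rw [intervalIntegral.integral_eq_sub_of_hasDerivAt (fun t _ => hud t)
        (hdcont.intervalIntegrable 0 1)]
    have hle : ∫ s in (0:ℝ)..1, d s ≤ ∫ _ in (0:ℝ)..1, C := by
      apply intervalIntegral.integral_mono_on zero_le_one (hdcont.intervalIntegrable 0 1)
        (intervalIntegrable_const)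
      intro s hs
      have hsq : Real.sqrt (F s + δ ^ 2) > 0 := Real.sqrt_pos.mpr (hpos s)
      show 1 / (2 * Real.sqrt (F s + δ ^ 2)) * (2 * (⟪e s, g s⟫_ℂ).re) ≤ C
      rw [div_mul_eq_mul_div, one_mul, div_le_iff₀ (by positivity)]
      have h1 : (⟪e s, g s⟫_ℂ).re ≤ ‖e s‖ * ‖g s‖ := by
        calc (⟪e s, g s⟫_ℂ).re ≤ ‖⟪e s, g s⟫_ℂ‖ := Complex.re_le_norm _
          _ ≤ ‖e s‖ * ‖g s‖ := norm_inner_le_norm _ _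
      have h2 : ‖e s‖ ≤ Real.sqrt (F s + δ ^ 2) := by
        calc ‖e s‖ = Real.sqrt (F s) := by rw [hFnorm s, Real.sqrt_sq (norm_nonneg _)]
          _ ≤ Real.sqrt (F s + δ ^ 2) := Real.sqrt_le_sqrt (by nlinarith)
      have h3 : ‖g s‖ ≤ C := hC s hs
      have hC0 : 0 ≤ C := le_trans (norm_nonneg _) h3
      nlinarith [norm_nonneg (e s), norm_nonneg (g s)]
    have hCint : ∫ _ in (0:ℝ)..1, C = C := by simp
    have hu1 : u 1 ≤ u 0 + C := by
      rw [hCint] at hle; linarith [hint ▸ hle]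
    have he1 : ‖e 1‖ ≤ u 1 := by
      rw [hu_def]
      calc ‖e 1‖ = Real.sqrt (F 1) := by rw [hFnorm 1, Real.sqrt_sq (norm_nonneg _)]
        _ ≤ Real.sqrt (F 1 + δ ^ 2) := Real.sqrt_le_sqrt (by nlinarith)
    have hu0 : u 0 ≤ ‖e 0‖ + δ := by
      rw [hu_def]
      have : Real.sqrt (F 0 + δ ^ 2) ≤ Real.sqrt ((‖e 0‖ + δ) ^ 2) := by
        apply Real.sqrt_le_sqrt
        rw [hFnorm 0]
        nlinarith [norm_nonneg (e 0)]
      rwa [Real.sqrt_sq (by positivity)] at this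
    linarith
  by_contra hcon
  push_neg at hcon
  have : ‖e 1‖ ≤ ‖e 0‖ + C + (‖e 1‖ - (‖e 0‖ + C)) / 2 := key _ (by linarith)
  linarith
end AdiabaticAux

set_option maxHeartbeats 1000000 in
/-- Quantum adiabatic theorem (special case, eigenvalue 0):
`‖φ(1) - ψ(1)‖ ≤ (1/T) ((2‖H'‖ + ‖H''‖)/λ² + 4‖H'‖²/λ³)`; in particular
`‖φ(1) - ψ(1)‖ ≤ ε` whenever `T ≥ (1/ε) ((2‖H'‖ + ‖H''‖)/λ² + 4‖H'‖²/λ³)`. -/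
theorem stmt_10 {n : ℕ} (T : ℝ) (hT : 0 < T)
    (H H' H'' : ℝ → EuclideanSpace ℂ (Fin n) →L[ℂ] EuclideanSpace ℂ (Fin n))
    (φ φ' φ'' : ℝ → EuclideanSpace ℂ (Fin n))
    (ψ : ℝ → EuclideanSpace ℂ (Fin n))
    (lam M1 M2 : ℝ)
    (hlam : 0 < lam)
    (hherm : ∀ s, IsSelfAdjoint (H s))
    (hHd : ∀ s, HasDerivAt H (H' s) s)
    (hHd2 : ∀ s, HasDerivAt H' (H'' s) s)
    (hH'cont : Continuous H') (hH''cont : Continuous H'')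
    (hφd : ∀ s, HasDerivAt φ (φ' s) s)
    (hφd2 : ∀ s, HasDerivAt φ' (φ'' s) s)
    (hunit : ∀ s, ‖φ s‖ = 1)
    (heig : ∀ s, H s (φ s) = 0)
    (horth : ∀ s, ⟪φ' s, φ s⟫_ℂ = 0)
    -- `0` is a non-degenerate eigenvalue of `H(s)`
    (hnondeg : ∀ s, ∀ v, H s v = 0 → ∃ c : ℂ, v = c • φ s)
    -- and all other eigenvalues of `H(s)` are at least `λ` in absolute value
    (hgap : ∀ s, ∀ μ ∈ spectrum ℂ (H s), μ ≠ 0 → lam ≤ ‖μ‖)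
    -- `‖H'‖ ≤ M1`, `‖H''‖ ≤ M2` on `[0,1]`
    (hM1 : ∀ s ∈ Set.Icc (0:ℝ) 1, ‖H' s‖ ≤ M1)
    (hM2 : ∀ s ∈ Set.Icc (0:ℝ) 1, ‖H'' s‖ ≤ M2)
    -- Schrödinger equation `i ψ'(s) = T H(s) ψ(s)`, `ψ(0) = φ(0)`
    (hψ : ∀ s, HasDerivAt ψ ((-Complex.I * (T : ℂ)) • (H s (ψ s))) s)
    (hψ0 : ψ 0 = φ 0) :
    ‖φ 1 - ψ 1‖ ≤ (1 / T) * ((2 * M1 + M2) / lam ^ 2 + 4 * M1 ^ 2 / lam ^ 3)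
    ∧ ∀ ε > 0, (1 / ε) * ((2 * M1 + M2) / lam ^ 2 + 4 * M1 ^ 2 / lam ^ 3) ≤ T →
        ‖φ 1 - ψ 1‖ ≤ ε := by
  have hM1_0 : (0:ℝ) ≤ M1 := le_trans (norm_nonneg _) (hM1 0 ⟨le_refl 0, zero_le_one⟩)
  have hM2_0 : (0:ℝ) ≤ M2 := le_trans (norm_nonneg _) (hM2 0 ⟨le_refl 0, zero_le_one⟩)
  have hsymH : ∀ s (x y : EuclideanSpace ℂ (Fin n)), ⟪H s x, y⟫_ℂ = ⟪x, H s y⟫_ℂ := fun s =>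
    ContinuousLinearMap.isSelfAdjoint_iff_isSymmetric.mp (hherm s)
  have hsymH' : ∀ s (x y : EuclideanSpace ℂ (Fin n)), ⟪H' s x, y⟫_ℂ = ⟪x, H' s y⟫_ℂ :=
    deriv_symm hsymH hHd
  have hgapn : ∀ s (u : EuclideanSpace ℂ (Fin n)), ⟪φ s, u⟫_ℂ = 0 → lam * ‖u‖ ≤ ‖H s u‖ :=
    fun s => gap_lemma (H s) (hherm s) lam hlam (φ s) (hnondeg s) (hgap s)
  have horth' : ∀ s, ⟪φ s, φ' s⟫_ℂ = 0 := fun s => by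
    rw [← inner_conj_symm, horth s, map_zero]
  -- the operators
  set P : ℝ → EuclideanSpace ℂ (Fin n) →L[ℂ] EuclideanSpace ℂ (Fin n) :=
    fun s => projD (φ s) (φ s) with hP_def
  have hPproj : ∀ s, P s = proj (φ s) := fun s => rfl
  set A : ℝ → EuclideanSpace ℂ (Fin n) →L[ℂ] EuclideanSpace ℂ (Fin n) :=
    fun s => H s + P s with hA_def
  have hAunit : ∀ s, IsUnit (A s) := fun s =>
    unit_aux (H s) (hsymH s) (φ s) (hunit s) (heig s) (hnondeg s)
  set R : ℝ → EuclideanSpace ℂ (Fin n) →L[ℂ] EuclideanSpace ℂ (Fin n) :=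
    fun s => Ring.inverse (A s) with hR_def
  have hRA : ∀ s v, R s (A s v) = v := by
    intro s v
    have h := Ring.inverse_mul_cancel (A s) (hAunit s)
    calc R s (A s v) = (Ring.inverse (A s) * A s) v := rfl
      _ = v := by rw [h]; rfl
  have hAR : ∀ s v, A s (R s v) = v := by
    intro s v
    have h := Ring.mul_inverse_cancel (A s) (hAunit s)
    calc A s (R s v) = (A s * Ring.inverse (A s)) v := rfl
      _ = v := by rw [h]; rfl
  set X : ℝ → EuclideanSpace ℂ (Fin n) →L[ℂ] EuclideanSpace ℂ (Fin n) :=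
    fun s => R s - P s with hX_def
  have hRXP : ∀ s v, R s v = X s v + P s v := by
    intro s v
    show R s v = (R s v - P s v) + P s v
    abel
  have hRphi : ∀ s, R s (φ s) = φ s := fun s => R_phi (hRA s) (hunit s) (heig s)
  have hRperp := fun s => R_perp (hsymH s) (hgapn s) (hunit s) (heig s) (hAR s)
  have hPapply : ∀ s v, P s v = ⟪φ s, v⟫_ℂ • φ s := fun s v => rfl
  have hXdecomp : ∀ s v, X s v = R s (v - P s v) := by
    intro s v
    have hRP : R s (P s v) = P s v := by
      rw [hPapply, map_smul, hRphi]
    rw [map_sub, hRP]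
    rfl
  have hXperp : ∀ s v, ⟪φ s, X s v⟫_ℂ = 0 := by
    intro s v
    rw [hXdecomp]
    have hperp : ⟪φ s, v - P s v⟫_ℂ = 0 := by
      rw [hPproj s]; exact perp_sub_proj (φ s) v (hunit s)
    exact (hRperp s _ hperp).1
  have hXnorm : ∀ s v, lam * ‖X s v‖ ≤ ‖v‖ := by
    intro s v
    rw [hXdecomp]
    have hperp : ⟪φ s, v - P s v⟫_ℂ = 0 := by
      rw [hPproj s]; exact perp_sub_proj (φ s) v (hunit s)
    refine le_trans (hRperp s _ hperp).2.2 ?_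
    rw [hPproj s]
    exact norm_sub_proj (φ s) v (hunit s)
  have hKXinv : ∀ s v, ⟪φ s, v⟫_ℂ = 0 → H s (X s v) = v := by
    intro s v hv
    have hPv : P s v = 0 := by rw [hPapply, hv, zero_smul]
    rw [hXdecomp, hPv, sub_zero]
    exact (hRperp s v hv).2.1
  have hXK : ∀ s z, X s (H s z) = z - P s z := by
    intro s z
    have hPH : P s (H s z) = 0 := by
      rw [hPapply]
      have : ⟪φ s, H s z⟫_ℂ = 0 := by rw [← hsymH s, heig s, inner_zero_left]
      rw [this, zero_smul]
    have h1 : H s z = A s z - P s z := by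
      rw [show A s z = H s z + P s z from rfl]; abel
    rw [hXdecomp, hPH, sub_zero, h1, map_sub, hRA]
    have hRP : R s (P s z) = P s z := by rw [hPapply, map_smul, hRphi]
    rw [hRP]
  have hXphi : ∀ s, X s (φ s) = 0 := by
    intro s
    show R s (φ s) - P s (φ s) = 0
    have hip : ⟪φ s, φ s⟫_ℂ = 1 := by
      rw [inner_self_eq_norm_sq_to_K, hunit s]; norm_num
    rw [hRphi, hPapply, hip, one_smul, sub_self]
  -- derivatives of the eigenvector equation
  have hKp' : ∀ s, H s (φ' s) = -(H' s (φ s)) := by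
    intro s
    have h0 : HasDerivAt (fun t => H t (φ t)) (H' s (φ s) + H s (φ' s)) s :=
      clm_app_hasDerivAt (hHd s) (hφd s)
    have h1 : HasDerivAt (fun t => H t (φ t)) 0 s := by
      have he : (fun t => H t (φ t)) = fun _ => (0 : EuclideanSpace ℂ (Fin n)) := funext heig
      rw [he]; exact hasDerivAt_const s 0
    have h2 := h0.unique h1
    rw [← zero_sub (H' s (φ s)), ← h2]
    abel
  have hK'p : ∀ s, H' s (φ s) = -(H s (φ' s)) := by
    intro s; rw [hKp' s, neg_neg]
  have hKp'' : ∀ s, H s (φ'' s) = -(H'' s (φ s)) - (H' s (φ' s) + H' s (φ' s)) := by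
    intro s
    have h0 : HasDerivAt (fun t => H t (φ' t)) (H' s (φ' s) + H s (φ'' s)) s :=
      clm_app_hasDerivAt (hHd s) (hφd2 s)
    have h1 : HasDerivAt (fun t => -(H' t (φ t))) (-(H'' s (φ s) + H' s (φ' s))) s :=
      (clm_app_hasDerivAt (hHd2 s) (hφd s)).neg
    have he : (fun t => H t (φ' t)) = fun t => -(H' t (φ t)) := funext fun t => by
      rw [hKp' t]
    rw [he] at h0
    have h2 := h0.unique h1
    have h3 : H s (φ'' s) = -(H'' s (φ s) + H' s (φ' s)) - H' s (φ' s) := by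
      rw [← h2]; abel
    rw [h3]; abel
  -- the first order correction q and its properties
  set q : ℝ → EuclideanSpace ℂ (Fin n) := fun s => X s (φ' s) with hq_def
  have hPp' : ∀ s, P s (φ' s) = 0 := fun s => by
    rw [hPapply, horth' s, zero_smul]
  have hRp' : ∀ s, R s (φ' s) = q s := fun s => by
    rw [hRXP s (φ' s), hPp' s, add_zero, hq_def]
  have hqperp : ∀ s, ⟪φ s, q s⟫_ℂ = 0 := fun s => hXperp s (φ' s)
  have hKq : ∀ s, H s (q s) = φ' s := fun s => hKXinv s (φ' s) (horth' s)
  have hp'X : ∀ s, φ' s = X s (-(H' s (φ s))) := by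
    intro s
    rw [← hKp' s]
    have := hXK s (φ' s)
    rw [hPp' s, sub_zero] at this
    exact this.symm
  -- the derivative of the family P
  set P' : ℝ → EuclideanSpace ℂ (Fin n) →L[ℂ] EuclideanSpace ℂ (Fin n) :=
    fun s => projD (φ s) (φ' s) + projD (φ' s) (φ s) with hP'_def
  have hPd : ∀ s, HasDerivAt P (P' s) s := fun s => proj_hasDerivAt (hφd s)
  have hAd : ∀ s, HasDerivAt A (H' s + P' s) s := fun s => (hHd s).add (hPd s)
  have hRd : ∀ s, HasDerivAt R (-(R s * (H' s + P' s) * R s)) s := fun s =>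
    inverse_hasDerivAt (hAd s) (hAunit s)
  have hXd : ∀ s, HasDerivAt X (-(R s * (H' s + P' s) * R s) - P' s) s := fun s =>
    (hRd s).sub (hPd s)
  have hqd : ∀ s, HasDerivAt q
      ((-(R s * (H' s + P' s) * R s) - P' s) (φ' s) + X s (φ'' s)) s := fun s =>
    clm_app_hasDerivAt (hXd s) (hφd2 s)
  -- the key identity for the derivative of q
  set D : ℝ → EuclideanSpace ℂ (Fin n) := fun s =>
    -(X s (H' s (q s))) - ⟪φ' s, q s⟫_ℂ • φ s
      + X s (X s (-(H'' s (φ s)) - (H' s (φ' s) + H' s (φ' s)))) with hD_def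
  have hqD : ∀ s, (-(R s * (H' s + P' s) * R s) - P' s) (φ' s) + X s (φ'' s) = D s := by
    intro s
    have hP'q : P' s (q s) = ⟪φ' s, q s⟫_ℂ • φ s := by
      rw [hP'_def]
      show projD (φ s) (φ' s) (q s) + projD (φ' s) (φ s) (q s) = _
      rw [projD_apply, projD_apply, hqperp s, zero_smul, zero_add]
    have hP'p' : P' s (φ' s) = ⟪φ' s, φ' s⟫_ℂ • φ s := by
      rw [hP'_def]
      show projD (φ s) (φ' s) (φ' s) + projD (φ' s) (φ s) (φ' s) = _
      rw [projD_apply, projD_apply, horth' s, zero_smul, zero_add]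
    have hinner : ⟪φ s, H' s (q s)⟫_ℂ = -⟪φ' s, φ' s⟫_ℂ := by
      rw [← hsymH' s (φ s) (q s), hK'p s, inner_neg_left, hsymH s (φ' s) (q s), hKq s]
    have hRK'q : R s (H' s (q s)) = X s (H' s (q s)) - ⟪φ' s, φ' s⟫_ℂ • φ s := by
      rw [hRXP s (H' s (q s)), hPapply, hinner, neg_smul, ← sub_eq_add_neg]
    have hmul : (R s * (H' s + P' s) * R s) (φ' s)
        = X s (H' s (q s)) - ⟪φ' s, φ' s⟫_ℂ • φ s + ⟪φ' s, q s⟫_ℂ • φ s := by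
      have e1 : (R s * (H' s + P' s) * R s) (φ' s)
          = R s ((H' s + P' s) (R s (φ' s))) := rfl
      rw [e1, hRp' s]
      have e2 : (H' s + P' s) (q s) = H' s (q s) + P' s (q s) := rfl
      rw [e2, hP'q, map_add, map_smul, hRphi s, hRK'q]
    have hXpp : X s (φ'' s) = X s (X s (H s (φ'' s))) := by
      have h1 := hXK s (φ'' s)
      have h2 : X s (X s (H s (φ'' s))) = X s (φ'' s) - X s (P s (φ'' s)) := by
        rw [h1, map_sub]
      have h3 : X s (P s (φ'' s)) = 0 := by
        rw [hPapply, map_smul, hXphi s, smul_zero]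
      rw [h2, h3, sub_zero]
    have lhs1 : (-(R s * (H' s + P' s) * R s) - P' s) (φ' s)
        = -((R s * (H' s + P' s) * R s) (φ' s)) - P' s (φ' s) := rfl
    rw [lhs1, hmul, hP'p', hXpp, hKp'' s, hD_def]
    abel
  -- continuity
  have happly : Continuous fun p : (EuclideanSpace ℂ (Fin n) →L[ℂ] EuclideanSpace ℂ (Fin n))
      × EuclideanSpace ℂ (Fin n) => p.1 p.2 := (isBBM_apply (n := n)).continuous
  have hφcont : Continuous φ := continuous_iff_continuousAt.mpr fun s => (hφd s).continuousAt
  have hφ'cont : Continuous φ' := continuous_iff_continuousAt.mpr fun s => (hφd2 s).continuousAt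
  have hXcont : Continuous X := continuous_iff_continuousAt.mpr fun s => (hXd s).continuousAt
  have hqcont : Continuous q := continuous_iff_continuousAt.mpr fun s => (hqd s).continuousAt
  have capp : ∀ (B : ℝ → EuclideanSpace ℂ (Fin n) →L[ℂ] EuclideanSpace ℂ (Fin n))
      (f : ℝ → EuclideanSpace ℂ (Fin n)), Continuous B → Continuous f →
      Continuous (fun s => B s (f s)) := fun B f hB hf => happly.comp (hB.prodMk hf)
  have hDcont : Continuous D := by
    rw [hD_def]
    apply Continuous.add
    · apply Continuous.sub
      · exact (capp X (fun s => H' s (q s)) hXcont (capp H' q hH'cont hqcont)).neg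
      · apply Continuous.fun_smul
        · exact (continuous_inner (𝕜 := ℂ)).comp (hφ'cont.prodMk hqcont)
        · exact hφcont
    · refine capp X _ hXcont (capp X _ hXcont ?_)
      apply Continuous.sub
      · exact (capp H'' φ hH''cont hφcont).neg
      · exact (capp H' φ' hH'cont hφ'cont).add (capp H' φ' hH'cont hφ'cont)
  -- norm bounds
  have hXn : ∀ s v, ‖X s v‖ ≤ lam⁻¹ * ‖v‖ := by
    intro s v
    rw [← div_eq_inv_mul, le_div_iff₀ hlam, mul_comm]
    exact hXnorm s v
  have hlaminv : (0:ℝ) ≤ lam⁻¹ := (inv_pos.mpr hlam).le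
  have hp'n : ∀ s ∈ Set.Icc (0:ℝ) 1, ‖φ' s‖ ≤ lam⁻¹ * M1 := by
    intro s hs
    rw [hp'X s]
    refine le_trans (hXn s _) (mul_le_mul_of_nonneg_left ?_ hlaminv)
    rw [norm_neg]
    calc ‖H' s (φ s)‖ ≤ ‖H' s‖ * ‖φ s‖ := (H' s).le_opNorm _
      _ = ‖H' s‖ := by rw [hunit s, mul_one]
      _ ≤ M1 := hM1 s hs
  have hqn : ∀ s ∈ Set.Icc (0:ℝ) 1, ‖q s‖ ≤ lam⁻¹ * (lam⁻¹ * M1) := by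
    intro s hs
    exact le_trans (hXn s _) (mul_le_mul_of_nonneg_left (hp'n s hs) hlaminv)
  set C2 : ℝ := lam⁻¹ * (M1 * (lam⁻¹ * (lam⁻¹ * M1)))
    + (lam⁻¹ * M1) * (lam⁻¹ * (lam⁻¹ * M1))
    + lam⁻¹ * (lam⁻¹ * (M2 + (M1 * (lam⁻¹ * M1) + M1 * (lam⁻¹ * M1)))) with hC2_def
  have hDn : ∀ s ∈ Set.Icc (0:ℝ) 1, ‖D s‖ ≤ C2 := by
    intro s hs
    have c1 : ‖X s (H' s (q s))‖ ≤ lam⁻¹ * (M1 * (lam⁻¹ * (lam⁻¹ * M1))) := by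
      refine le_trans (hXn s _) (mul_le_mul_of_nonneg_left ?_ hlaminv)
      calc ‖H' s (q s)‖ ≤ ‖H' s‖ * ‖q s‖ := (H' s).le_opNorm _
        _ ≤ M1 * (lam⁻¹ * (lam⁻¹ * M1)) :=
          mul_le_mul (hM1 s hs) (hqn s hs) (norm_nonneg _) hM1_0
    have c2 : ‖⟪φ' s, q s⟫_ℂ • φ s‖ ≤ (lam⁻¹ * M1) * (lam⁻¹ * (lam⁻¹ * M1)) := by
      rw [norm_smul, hunit s, mul_one]
      calc ‖⟪φ' s, q s⟫_ℂ‖ ≤ ‖φ' s‖ * ‖q s‖ := norm_inner_le_norm _ _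
        _ ≤ (lam⁻¹ * M1) * (lam⁻¹ * (lam⁻¹ * M1)) :=
          mul_le_mul (hp'n s hs) (hqn s hs) (norm_nonneg _) (by positivity)
    have c3 : ‖X s (X s (-(H'' s (φ s)) - (H' s (φ' s) + H' s (φ' s))))‖
        ≤ lam⁻¹ * (lam⁻¹ * (M2 + (M1 * (lam⁻¹ * M1) + M1 * (lam⁻¹ * M1)))) := by
      refine le_trans (hXn s _) (mul_le_mul_of_nonneg_left
        (le_trans (hXn s _) (mul_le_mul_of_nonneg_left ?_ hlaminv)) hlaminv)
      have d1 : ‖H'' s (φ s)‖ ≤ M2 := by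
        calc ‖H'' s (φ s)‖ ≤ ‖H'' s‖ * ‖φ s‖ := (H'' s).le_opNorm _
          _ = ‖H'' s‖ := by rw [hunit s, mul_one]
          _ ≤ M2 := hM2 s hs
      have d2 : ‖H' s (φ' s)‖ ≤ M1 * (lam⁻¹ * M1) := by
        calc ‖H' s (φ' s)‖ ≤ ‖H' s‖ * ‖φ' s‖ := (H' s).le_opNorm _
          _ ≤ M1 * (lam⁻¹ * M1) :=
            mul_le_mul (hM1 s hs) (hp'n s hs) (norm_nonneg _) hM1_0
      calc ‖-(H'' s (φ s)) - (H' s (φ' s) + H' s (φ' s))‖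
          ≤ ‖-(H'' s (φ s))‖ + ‖H' s (φ' s) + H' s (φ' s)‖ := norm_sub_le _ _
        _ ≤ M2 + (M1 * (lam⁻¹ * M1) + M1 * (lam⁻¹ * M1)) := by
            rw [norm_neg]
            exact add_le_add d1 (le_trans (norm_add_le _ _) (add_le_add d2 d2))
    rw [hD_def, hC2_def]
    calc ‖-(X s (H' s (q s))) - ⟪φ' s, q s⟫_ℂ • φ s
          + X s (X s (-(H'' s (φ s)) - (H' s (φ' s) + H' s (φ' s))))‖
        ≤ ‖-(X s (H' s (q s))) - ⟪φ' s, q s⟫_ℂ • φ s‖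
          + ‖X s (X s (-(H'' s (φ s)) - (H' s (φ' s) + H' s (φ' s))))‖ := norm_add_le _ _
      _ ≤ (‖-(X s (H' s (q s)))‖ + ‖⟪φ' s, q s⟫_ℂ • φ s‖)
          + ‖X s (X s (-(H'' s (φ s)) - (H' s (φ' s) + H' s (φ' s))))‖ := by
          exact add_le_add_left (norm_sub_le _ _) _
      _ ≤ _ := by
          rw [norm_neg]
          exact add_le_add (add_le_add c1 c2) c3
  -- the corrected trajectory and the error term
  set w : ℝ → EuclideanSpace ℂ (Fin n) := fun s => Complex.I • q s with hw_def
  have hwd : ∀ s, HasDerivAt w (Complex.I • D s) s := by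
    intro s
    have h := hqd s
    rw [hqD s] at h
    exact h.const_smul Complex.I
  set gg : ℝ → EuclideanSpace ℂ (Fin n) := fun s => (T⁻¹ : ℝ) • (Complex.I • D s) with hgg_def
  set ee : ℝ → EuclideanSpace ℂ (Fin n) := fun s => (φ s + (T⁻¹ : ℝ) • w s) - ψ s with hee_def
  have hHw : ∀ s, H s (w s) = Complex.I • φ' s := by
    intro s
    rw [hw_def]
    show H s (Complex.I • q s) = _
    rw [map_smul, hKq s]
  have hTc : ((T:ℝ):ℂ) ≠ 0 := by
    simp only [ne_eq, Complex.ofReal_eq_zero]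
    exact ne_of_gt hT
  have hHv : ∀ s, (-Complex.I * (T:ℂ)) • H s (φ s + (T⁻¹ : ℝ) • w s) = φ' s := by
    intro s
    rw [map_add, heig s, zero_add, ContinuousLinearMap.map_smul_of_tower, hHw s]
    rw [smul_comm, smul_smul]
    have hcoef : -Complex.I * (T:ℂ) * Complex.I = (T:ℂ) := by
      ring_nf
      rw [Complex.I_sq]
      ring
    rw [hcoef]
    have : (T⁻¹ : ℝ) • ((T:ℂ) • φ' s) = (((T⁻¹:ℝ):ℂ) * (T:ℂ)) • φ' s := by
      rw [← smul_smul, ← algebraMap_smul ℂ (T⁻¹:ℝ) ((T:ℂ) • φ' s), Complex.coe_algebraMap]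
    rw [this]
    have : (((T⁻¹:ℝ):ℂ) * (T:ℂ)) = 1 := by
      rw [← Complex.ofReal_mul, inv_mul_cancel₀ (ne_of_gt hT), Complex.ofReal_one]
    rw [this, one_smul]
  have hed : ∀ s, HasDerivAt ee (gg s + (-Complex.I * (T:ℂ)) • (H s (ee s))) s := by
    intro s
    have h1 : HasDerivAt (fun t => φ t + (T⁻¹ : ℝ) • w t)
        (φ' s + (T⁻¹ : ℝ) • (Complex.I • D s)) s := (hφd s).add ((hwd s).const_smul (T⁻¹ : ℝ))
    have h2 := h1.sub (hψ s)
    have hval : φ' s + (T⁻¹:ℝ) • (Complex.I • D s) - (-Complex.I * (T:ℂ)) • (H s (ψ s))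
        = gg s + (-Complex.I * (T:ℂ)) • (H s (ee s)) := by
      have hsplit : H s (ee s) = H s (φ s + (T⁻¹ : ℝ) • w s) - H s (ψ s) := by
        rw [hee_def]; exact map_sub _ _ _
      rw [hsplit, smul_sub, hgg_def, ← hHv s]
      abel
    rw [← hval]
    exact h2
  have hggcont : Continuous gg := by
    rw [hgg_def]
    exact (continuous_const.fun_smul (continuous_const.fun_smul hDcont))
  have hggn : ∀ s ∈ Set.Icc (0:ℝ) 1, ‖gg s‖ ≤ T⁻¹ * C2 := by
    intro s hs
    rw [hgg_def]
    show ‖(T⁻¹:ℝ) • (Complex.I • D s)‖ ≤ _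
    rw [norm_smul, norm_smul, Complex.norm_I, one_mul, Real.norm_eq_abs,
      abs_of_pos (inv_pos.mpr hT)]
    exact mul_le_mul_of_nonneg_left (hDn s hs) (inv_pos.mpr hT).le
  have hmain : ‖ee 1‖ ≤ ‖ee 0‖ + T⁻¹ * C2 := diss_bound hsymH hed hggcont _ hggn
  have hee0 : ee 0 = (T⁻¹ : ℝ) • w 0 := by
    rw [hee_def]
    show (φ 0 + (T⁻¹ : ℝ) • w 0) - ψ 0 = _
    rw [hψ0]
    abel
  have hwnorm : ∀ s, ‖w s‖ = ‖q s‖ := fun s => by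
    rw [hw_def]
    show ‖Complex.I • q s‖ = _
    rw [norm_smul, Complex.norm_I, one_mul]
  have hee0n : ‖ee 0‖ ≤ T⁻¹ * (lam⁻¹ * (lam⁻¹ * M1)) := by
    rw [hee0, norm_smul, Real.norm_eq_abs, abs_of_pos (inv_pos.mpr hT), hwnorm 0]
    exact mul_le_mul_of_nonneg_left (hqn 0 ⟨le_refl 0, zero_le_one⟩) (inv_pos.mpr hT).le
  have hsplit1 : φ 1 - ψ 1 = ee 1 - (T⁻¹ : ℝ) • w 1 := by
    rw [hee_def]
    show _ = ((φ 1 + (T⁻¹ : ℝ) • w 1) - ψ 1) - (T⁻¹ : ℝ) • w 1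
    abel
  have hfinal : ‖φ 1 - ψ 1‖ ≤ T⁻¹ * (lam⁻¹ * (lam⁻¹ * M1)) + T⁻¹ * C2
      + T⁻¹ * (lam⁻¹ * (lam⁻¹ * M1)) := by
    rw [hsplit1]
    calc ‖ee 1 - (T⁻¹ : ℝ) • w 1‖ ≤ ‖ee 1‖ + ‖(T⁻¹ : ℝ) • w 1‖ := norm_sub_le _ _
      _ ≤ (‖ee 0‖ + T⁻¹ * C2) + T⁻¹ * (lam⁻¹ * (lam⁻¹ * M1)) := by
          refine add_le_add hmain ?_
          rw [norm_smul, Real.norm_eq_abs, abs_of_pos (inv_pos.mpr hT), hwnorm 1]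
          exact mul_le_mul_of_nonneg_left (hqn 1 ⟨zero_le_one, le_refl 1⟩) (inv_pos.mpr hT).le
      _ ≤ _ := by
          refine add_le_add (add_le_add hee0n (le_refl _)) (le_refl _)
  have hrhs : T⁻¹ * (lam⁻¹ * (lam⁻¹ * M1)) + T⁻¹ * C2 + T⁻¹ * (lam⁻¹ * (lam⁻¹ * M1))
      = (1 / T) * ((2 * M1 + M2) / lam ^ 2 + 4 * M1 ^ 2 / lam ^ 3) := by
    rw [hC2_def]
    field_simp
    ring
  have part1 : ‖φ 1 - ψ 1‖ ≤ (1 / T) * ((2 * M1 + M2) / lam ^ 2 + 4 * M1 ^ 2 / lam ^ 3) := by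
    rw [← hrhs]
    exact hfinal
  refine ⟨part1, ?_⟩
  intro ε hε hεT
  have h1 : (2 * M1 + M2) / lam ^ 2 + 4 * M1 ^ 2 / lam ^ 3 ≤ ε * T := by
    have h2 := mul_le_mul_of_nonneg_left hεT hε.le
    rw [one_div, ← mul_assoc, mul_inv_cancel₀ (ne_of_gt hε), one_mul] at h2
    exact h2
  have h3 : (1 / T) * ((2 * M1 + M2) / lam ^ 2 + 4 * M1 ^ 2 / lam ^ 3) ≤ ε := by
    rw [one_div, inv_mul_eq_div, div_le_iff₀ hT]
    linarith
  exact le_trans part1 h3
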